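/- Let X be a set and T a bounded operator on ℓ²(X) such that T lies in the universal ULF quasi-local algebra: for every ε > 0 there exists a binary relation E ⊆ X×X with all rows and columns of cardinality at most some M, such that for all Y₁, Y₂ ⊆ X with (Y₁ × Y₂) ∩ E = ∅ one has ‖P_{Y₁} T P_{Y₂}‖ < ε. Then T satisfies: for every ε > 0 there is M > 0 such that for every x ∈ X there exists v ∈ ℓ²(X) with #supp(v) ≤ M and ‖Tδ_x − v‖ < ε. -/

import Mathlib

noncomputable section
open scoped ENNReal
open Filter

/-- The Hilbert space ℓ²(X). -/
abbrev L2 (X : Type*) := lp (fun _ : X => ℂ) 2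

/-- The Dirac function δ_x ∈ ℓ²(X). -/
noncomputable def dirac {X : Type*} (x : X) : L2 X := by
  classical exact lp.single 2 x 1
lemma projRpowLe {X : Type*} (Y : Set X) (f : L2 X) (x : X) :
    ‖Y.indicator (⇑f) x‖ ^ (2 : ℝ≥0∞).toReal ≤ ‖f x‖ ^ (2 : ℝ≥0∞).toReal :=
  Real.rpow_le_rpow (norm_nonneg _) (norm_indicator_le_norm_self (⇑f) x) (by norm_num)

lemma projMem {X : Type*} (Y : Set X) (f : L2 X) : Memℓp (Y.indicator (⇑f)) 2 :=
  memℓp_gen <| Summable.of_nonneg_of_le (fun x => by positivity) (projRpowLe Y f)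
    ((lp.memℓp f).summable (by norm_num))

/-- The orthogonal projection of ℓ²(X) onto ℓ²(Y), for Y ⊆ X. -/
noncomputable def projL {X : Type*} (Y : Set X) : L2 X →L[ℂ] L2 X :=
  LinearMap.mkContinuous
    { toFun := fun f => ⟨Y.indicator (⇑f), projMem Y f⟩
      map_add' := by
        intro f g; apply Subtype.ext; funext x
        show Y.indicator (⇑(f + g)) x = Y.indicator (⇑f) x + Y.indicator (⇑g) x
        rw [lp.coeFn_add]
        by_cases h : x ∈ Y <;>
          simp [Set.indicator_of_mem, Set.indicator_of_notMem, h]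
      map_smul' := by
        intro c f; apply Subtype.ext; funext x
        show Y.indicator (⇑(c • f)) x = c • Y.indicator (⇑f) x
        rw [lp.coeFn_smul]
        by_cases h : x ∈ Y <;>
          simp [Set.indicator_of_mem, Set.indicator_of_notMem, h] }
    1
    (by
      intro f
      rw [one_mul]
      refine lp.norm_le_of_tsum_le (by norm_num) (norm_nonneg f) ?_
      calc (∑' x : X, ‖Y.indicator (⇑f) x‖ ^ (2 : ℝ≥0∞).toReal)
          ≤ ∑' x : X, ‖f x‖ ^ (2 : ℝ≥0∞).toReal :=
            Summable.tsum_le_tsum (projRpowLe Y f)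
              (Summable.of_nonneg_of_le (fun x => by positivity) (projRpowLe Y f)
                ((lp.memℓp f).summable (by norm_num)))
              ((lp.memℓp f).summable (by norm_num))
        _ = ‖f‖ ^ (2 : ℝ≥0∞).toReal := (lp.norm_rpow_eq_tsum (by norm_num) f).symm)

/-- An operator that is quasi-local with respect to the universal uniformly
locally finite coarse structure on X has the uniform finite-approximation property. -/
theorem universalULF_quasiLocal_uniformApprox {X : Type*} (T : L2 X →L[ℂ] L2 X)
    (hql : ∀ ε : ℝ, 0 < ε → ∃ (E : Set (X × X)) (M : ℕ),
      (∀ x : X,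
        ({y : X | (y, x) ∈ E}.Finite ∧ {y : X | (y, x) ∈ E}.ncard ≤ M) ∧
        ({y : X | (x, y) ∈ E}.Finite ∧ {y : X | (x, y) ∈ E}.ncard ≤ M)) ∧
      (∀ Y₁ Y₂ : Set X, (Y₁ ×ˢ Y₂) ∩ E = ∅ →
        ‖(projL Y₁).comp (T.comp (projL Y₂))‖ < ε)) :
    ∀ ε : ℝ, 0 < ε → ∃ M : ℕ, ∀ x : X, ∃ v : L2 X,
      (∃ s : Finset X, s.card ≤ M ∧ ∀ y ∉ s, v y = 0) ∧ ‖T (dirac x) - v‖ < ε := by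
  classical
  intro ε hε
  obtain ⟨E, M, hE, hnorm⟩ := hql ε hε
  refine ⟨M, fun x => ?_⟩
  set Y : Set X := {y | (y, x) ∈ E} with hYdef
  obtain ⟨⟨hYfin, hYcard⟩, -⟩ := hE x
  refine ⟨projL Y (T (dirac x)), ⟨hYfin.toFinset, ?_, ?_⟩, ?_⟩
  · rwa [Set.ncard_eq_toFinset_card _ hYfin] at hYcard
  · intro y hy
    exact Set.indicator_of_notMem (by simpa [hYdef] using hy) _
  · have hx : projL ({x} : Set X) (dirac x) = dirac x := by
      apply Subtype.ext; funext z
      show ({x} : Set X).indicator (⇑(dirac x)) z = (dirac x) z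
      by_cases h : z = x
      · simp [h]
      · have : (dirac x) z = 0 := by
          simp [dirac, lp.single_apply, h]
        simp [Set.indicator_of_notMem, h, this]
    have key : T (dirac x) - projL Y (T (dirac x))
        = (projL Yᶜ).comp (T.comp (projL ({x} : Set X))) (dirac x) := by
      rw [ContinuousLinearMap.comp_apply, ContinuousLinearMap.comp_apply, hx]
      apply Subtype.ext; funext z
      show (⇑(T (dirac x) - projL Y (T (dirac x)))) z
          = Yᶜ.indicator (⇑(T (dirac x))) z
      rw [lp.coeFn_sub]
      by_cases h : z ∈ Y
      · simp [Set.indicator_of_mem h, Set.indicator_of_notMem, h,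
          show (projL Y (T (dirac x))) z = Y.indicator (⇑(T (dirac x))) z from rfl]
      · simp [Set.indicator_of_notMem h, Set.indicator_of_mem,
          show (projL Y (T (dirac x))) z = Y.indicator (⇑(T (dirac x))) z from rfl, h]
    rw [key]
    have hdisj : (Yᶜ ×ˢ ({x} : Set X)) ∩ E = ∅ := by
      ext ⟨a, b⟩
      simp only [Set.mem_inter_iff, Set.mem_prod, Set.mem_compl_iff, Set.mem_singleton_iff,
        Set.mem_empty_iff_false, iff_false, not_and]
      rintro ⟨ha, rfl⟩
      exact ha
    have hbound := hnorm Yᶜ ({x} : Set X) hdisj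
    have hle : ‖(projL Yᶜ).comp (T.comp (projL ({x} : Set X))) (dirac x)‖
        ≤ ‖(projL Yᶜ).comp (T.comp (projL ({x} : Set X)))‖ := by
      have := ((projL Yᶜ).comp (T.comp (projL ({x} : Set X)))).le_opNorm (dirac x)
      have hnd : ‖dirac x‖ = 1 := by
        have h := lp.norm_single (p := 2) (E := fun _ : X => ℂ)
          (by norm_num) x (1 : ℂ)
        simpa [dirac] using h
      rwa [hnd, mul_one] at this
    linarith
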